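/- Let A ⊆ B(X) be an abelian, unital, norm-closed subalgebra with split strict multiplicity 2. For every T ∈ algLat(A) there exists a₀ ∈ A such that (T − T_{a₀})(x) ∈ R₁ ⊕ R₂ for every x ∈ X, where Rⱼ is the radical of A/Iⱼ. -/

import Mathlib

set_option synthInstance.maxHeartbeats 1000000
set_option maxHeartbeats 1000000

/-- The annihilator ideal `Iⱼ = {a ∈ A : a xⱼ = 0}` of a vector. -/
def annIdeal {X : Type*} [NormedAddCommGroup X] [NormedSpace ℂ X]
    (A : Subalgebra ℂ (X →L[ℂ] X)) (x : X) : Ideal ↥A where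
  carrier := {a | (a : X →L[ℂ] X) x = 0}
  add_mem' := fun {a b} ha hb => by
    simp only [Set.mem_setOf_eq] at *
    rw [Subalgebra.coe_add, ContinuousLinearMap.add_apply, ha, hb, add_zero]
  zero_mem' := by simp
  smul_mem' := fun c a ha => by
    simp only [Set.mem_setOf_eq, smul_eq_mul] at *
    rw [Subalgebra.coe_mul, ContinuousLinearMap.mul_apply, ha, map_zero]

/-- `c ∈ A` maps into the radical of `A/I`, i.e. `c` lies in every maximal ideal
of `A` containing the annihilator ideal of `x`. -/
def inRadical {X : Type*} [NormedAddCommGroup X] [NormedSpace ℂ X]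
    (A : Subalgebra ℂ (X →L[ℂ] X)) (x : X) (c : ↥A) : Prop :=
  ∀ M : Ideal ↥A, M.IsMaximal → annIdeal A x ≤ M → c ∈ M

namespace Stmt8Helper

variable {X : Type*} [NormedAddCommGroup X] [NormedSpace ℂ X]

/-- The evaluation map `a ↦ a x` as a continuous linear map `↥A → X`. -/
noncomputable def ev (A : Subalgebra ℂ (X →L[ℂ] X)) (x : X) : ↥A →L[ℂ] X :=
  LinearMap.mkContinuous
    { toFun := fun a => (a : X →L[ℂ] X) x
      map_add' := fun a b => by
        simp [ContinuousLinearMap.add_apply]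
      map_smul' := fun c a => by
        simp [ContinuousLinearMap.smul_apply] }
    ‖x‖ (fun a => by rw [mul_comm]; exact (a : X →L[ℂ] X).le_opNorm x)

@[simp] lemma ev_apply (A : Subalgebra ℂ (X →L[ℂ] X)) (x : X) (a : ↥A) :
    ev A x a = (a : X →L[ℂ] X) x := rfl

/-- The range `A x`. -/
noncomputable def rng (A : Subalgebra ℂ (X →L[ℂ] X)) (x : X) : Submodule ℂ X :=
  LinearMap.range (ev A x : ↥A →ₗ[ℂ] X)

lemma mem_rng {A : Subalgebra ℂ (X →L[ℂ] X)} {x y : X} :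
    y ∈ rng A x ↔ ∃ c : ↥A, (c : X →L[ℂ] X) x = y := Iff.rfl

lemma coe_rng (A : Subalgebra ℂ (X →L[ℂ] X)) (x : X) :
    ((rng A x : Submodule ℂ X) : Set X) = {y : X | ∃ a ∈ A, a x = y} := by
  ext y
  constructor
  · rintro ⟨a, rfl⟩
    exact ⟨a, a.2, rfl⟩
  · rintro ⟨a, ha, rfl⟩
    exact ⟨⟨a, ha⟩, rfl⟩

/-- The set `M x` for an ideal `M` of `↥A`, as a submodule of `X`. -/
def idealRng (A : Subalgebra ℂ (X →L[ℂ] X)) (x : X) (M : Ideal ↥A) : Submodule ℂ X where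
  carrier := {y | ∃ c ∈ M, (c : X →L[ℂ] X) x = y}
  zero_mem' := ⟨0, M.zero_mem, by simp⟩
  add_mem' := by
    rintro y z ⟨c, hc, rfl⟩ ⟨d, hd, rfl⟩
    exact ⟨c + d, M.add_mem hc hd, by simp [ContinuousLinearMap.add_apply]⟩
  smul_mem' := by
    rintro t y ⟨c, hc, rfl⟩
    refine ⟨algebraMap ℂ ↥A t * c, M.mul_mem_left _ hc, ?_⟩
    simp only [Subalgebra.coe_mul, ContinuousLinearMap.mul_apply]
    rw [Subalgebra.coe_algebraMap, Algebra.algebraMap_eq_smul_one]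
    simp

lemma mem_idealRng {A : Subalgebra ℂ (X →L[ℂ] X)} {x y : X} {M : Ideal ↥A} :
    y ∈ idealRng A x M ↔ ∃ c ∈ M, (c : X →L[ℂ] X) x = y := Iff.rfl

/-- Gelfand–Mazur: modulo a maximal ideal, every element is a scalar. -/
lemma exists_scalar {B : Type*} [NormedRing B] [NormedAlgebra ℂ B] [CompleteSpace B]
    (hc : ∀ a b : B, a * b = b * a) (M : Ideal B) (hM : M.IsMaximal) (a : B) :
    ∃ l : ℂ, a - algebraMap ℂ B l ∈ M := by
  letI : NormedCommRing B := { ‹NormedRing B› with mul_comm := hc }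
  haveI := hM
  set ψ : B →ₐ[ℂ] ℂ := WeakDual.CharacterSpace.equivAlgHom (Ideal.toCharacterSpace M) with hψ
  have hψval : ∀ b : B, ψ b = Ideal.toCharacterSpace M b := fun b => by
    rw [hψ, WeakDual.CharacterSpace.equivAlgHom_coe]
  have hker : M = RingHom.ker ψ := by
    refine hM.eq_of_le (RingHom.ker_ne_top _) (fun m hm => ?_)
    rw [RingHom.mem_ker, hψval]
    exact Ideal.toCharacterSpace_apply_eq_zero_of_mem M hm
  refine ⟨ψ a, ?_⟩
  rw [hker, RingHom.mem_ker, map_sub, AlgHom.commutes, Algebra.algebraMap_self_apply, sub_self]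

section Main

variable {X : Type*} [NormedAddCommGroup X] [NormedSpace ℂ X] [CompleteSpace X]
variable (A : Subalgebra ℂ (X →L[ℂ] X))

/-- The key "local" lemma: if `S` is an operator in `algLat A` with `S x = 0` and `M` is a
maximal ideal of `A` containing the annihilator of `x`, then for `a ∈ A` the vector `S (a x)`
lies in `M x`, provided `A x` is closed. -/
lemma key_step [CompleteSpace ↥A]
    (hcomm : ∀ a ∈ A, ∀ b ∈ A, a * b = b * a)
    (x : X) (hcx : IsClosed {y : X | ∃ a ∈ A, a x = y})
    (S : X →L[ℂ] X)
    (hS : ∀ K : Submodule ℂ X, IsClosed (K : Set X) →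
      (∀ a ∈ A, ∀ y ∈ K, a y ∈ K) → ∀ y ∈ K, S y ∈ K)
    (hSx : S x = 0)
    (M : Ideal ↥A) (hM : M.IsMaximal) (hle : annIdeal A x ≤ M)
    (a : ↥A) : S ((a : X →L[ℂ] X) x) ∈ idealRng A x M := by
  haveI := hM
  have hMset : IsClosed ((M : Set ↥A)) := Ideal.IsMaximal.isClosed
  have hRc : IsClosed ((rng A x : Submodule ℂ X) : Set X) := by
    rw [coe_rng]; exact hcx
  haveI : CompleteSpace ↥(rng A x) := hRc.completeSpace_coe
  -- the surjection onto the range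
  have hmem : ∀ b : ↥A, (b : X →L[ℂ] X) x ∈ rng A x := fun b => ⟨b, rfl⟩
  let p : ↥A →L[ℂ] ↥(rng A x) := (ev A x).codRestrict (rng A x) hmem
  have hpsurj : Function.Surjective p := by
    rintro ⟨y, hy⟩
    obtain ⟨c, hc⟩ := hy
    exact ⟨c, Subtype.ext hc⟩
  -- `M x` is closed
  have hq := (ContinuousLinearMap.isOpenMap p hpsurj).isQuotientMap p.continuous hpsurj
  have hpreim : p ⁻¹' (p '' (M : Set ↥A)) = (M : Set ↥A) := by
    apply Set.Subset.antisymm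
    · rintro z ⟨w, hwM, hww⟩
      have hzx : (↑(z - w) : X →L[ℂ] X) x = 0 := by
        have hval : (w : X →L[ℂ] X) x = (z : X →L[ℂ] X) x := congrArg Subtype.val hww
        simp [ContinuousLinearMap.sub_apply, hval]
      have hz : z - w ∈ M := hle hzx
      have : z = (z - w) + w := by abel
      rw [this]
      exact M.add_mem hz hwM
    · exact Set.subset_preimage_image _ _
  have himclosed : IsClosed (p '' (M : Set ↥A)) :=
    hq.isClosed_preimage.mp (by rw [hpreim]; exact hMset)
  have hWclosedset : IsClosed (Subtype.val '' (p '' (M : Set ↥A)) : Set X) :=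
    hRc.isClosedEmbedding_subtypeVal.isClosedMap _ himclosed
  have hWcoe : ((idealRng A x M : Submodule ℂ X) : Set X)
      = Subtype.val '' (p '' (M : Set ↥A)) := by
    ext y
    constructor
    · rintro ⟨c, hcM, rfl⟩
      exact ⟨p c, ⟨c, hcM, rfl⟩, rfl⟩
    · rintro ⟨u, ⟨c, hcM, rfl⟩, rfl⟩
      exact ⟨c, hcM, rfl⟩
  have hWc : IsClosed ((idealRng A x M : Submodule ℂ X) : Set X) := by
    rw [hWcoe]; exact hWclosedset
  have hWinv : ∀ g ∈ A, ∀ y ∈ idealRng A x M, g y ∈ idealRng A x M := by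
    rintro g hg y ⟨c, hcM, rfl⟩
    exact ⟨⟨g, hg⟩ * c, M.mul_mem_left _ hcM,
      by rw [Subalgebra.coe_mul, ContinuousLinearMap.mul_apply]⟩
  -- decompose `a = m + l•1`
  obtain ⟨l, hl⟩ := exists_scalar (fun u v => Subtype.ext (hcomm _ u.2 _ v.2)) M hM a
  set m : ↥A := a - algebraMap ℂ ↥A l with hm
  have hax : (a : X →L[ℂ] X) x = (m : X →L[ℂ] X) x + l • x := by
    have h1 : a = m + algebraMap ℂ ↥A l := by rw [hm]; abel
    have h2 : ((algebraMap ℂ ↥A l : ↥A) : X →L[ℂ] X) x = l • x := by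
      rw [Subalgebra.coe_algebraMap, Algebra.algebraMap_eq_smul_one]
      simp
    rw [h1, Subalgebra.coe_add, ContinuousLinearMap.add_apply, h2]
  have hmW : (m : X →L[ℂ] X) x ∈ idealRng A x M := ⟨m, hl, rfl⟩
  have hSm := hS _ hWc hWinv _ hmW
  rw [hax, map_add, map_smul, hSx, smul_zero, add_zero]
  exact hSm

end Main

end Stmt8Helper


/-- Let `A ⊆ B(X)` be an abelian, unital, norm-closed operator algebra of split
strict multiplicity `2`. For every `T ∈ algLat A` there is `a₀ ∈ A` with
`(T - T_{a₀}) x ∈ R₁ ⊕ R₂` for all `x`, where `Rⱼ` is the radical of `A/Iⱼ`. -/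
theorem stmt8 {X : Type*} [NormedAddCommGroup X] [NormedSpace ℂ X] [CompleteSpace X]
    (A : Subalgebra ℂ (X →L[ℂ] X))
    (hA : IsClosed (A : Set (X →L[ℂ] X)))
    (hcomm : ∀ a ∈ A, ∀ b ∈ A, a * b = b * a)
    (x₁ x₂ : X)
    (hc1 : IsClosed {y : X | ∃ a ∈ A, a x₁ = y})
    (hc2 : IsClosed {y : X | ∃ a ∈ A, a x₂ = y})
    (hspan : ∀ y : X, ∃ a ∈ A, ∃ b ∈ A, y = a x₁ + b x₂)
    (hind : ∀ a ∈ A, ∀ b ∈ A, a x₁ + b x₂ = 0 → a x₁ = 0 ∧ b x₂ = 0)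
    (T : X →L[ℂ] X)
    (hT : ∀ K : Submodule ℂ X, IsClosed (K : Set X) →
      (∀ a ∈ A, ∀ y ∈ K, a y ∈ K) → ∀ y ∈ K, T y ∈ K) :
    ∃ a₀ ∈ A, ∀ y : X, ∃ c₁ c₂ : ↥A,
      inRadical A x₁ c₁ ∧ inRadical A x₂ c₂ ∧
      T y - a₀ y = ((c₁ : X →L[ℂ] X)) x₁ + ((c₂ : X →L[ℂ] X)) x₂ := by
  classical
  open Stmt8Helper in
  haveI hAcs : CompleteSpace ↥A := hA.completeSpace_coe
  have hM1c : IsClosed ((rng A x₁ : Submodule ℂ X) : Set X) := by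
    rw [coe_rng]; exact hc1
  have hM2c : IsClosed ((rng A x₂ : Submodule ℂ X) : Set X) := by
    rw [coe_rng]; exact hc2
  haveI : CompleteSpace ↥(rng A x₁) := hM1c.completeSpace_coe
  haveI : CompleteSpace ↥(rng A x₂) := hM2c.completeSpace_coe
  have hmem1 : ∀ a : ↥A, (a : X →L[ℂ] X) x₁ ∈ rng A x₁ := fun a => ⟨a, rfl⟩
  have hmem2 : ∀ a : ↥A, (a : X →L[ℂ] X) x₂ ∈ rng A x₂ := fun a => ⟨a, rfl⟩
  -- surjections with norm control
  let p₁ : ↥A →L[ℂ] ↥(rng A x₁) := (ev A x₁).codRestrict (rng A x₁) hmem1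
  let p₂ : ↥A →L[ℂ] ↥(rng A x₂) := (ev A x₂).codRestrict (rng A x₂) hmem2
  have hp₁surj : Function.Surjective p₁ := by
    rintro ⟨y, hy⟩; obtain ⟨c, hc⟩ := hy; exact ⟨c, Subtype.ext hc⟩
  have hp₂surj : Function.Surjective p₂ := by
    rintro ⟨y, hy⟩; obtain ⟨c, hc⟩ := hy; exact ⟨c, Subtype.ext hc⟩
  obtain ⟨C₁, hC₁pos, hC₁⟩ := ContinuousLinearMap.exists_preimage_norm_le p₁ hp₁surj
  obtain ⟨C₂, hC₂pos, hC₂⟩ := ContinuousLinearMap.exists_preimage_norm_le p₂ hp₂surj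
  -- the direct sum decomposition, as a continuous linear equivalence
  let e : (↥(rng A x₁) × ↥(rng A x₂)) →L[ℂ] X :=
    ((rng A x₁).subtypeL.comp (ContinuousLinearMap.fst ℂ _ _)) +
    ((rng A x₂).subtypeL.comp (ContinuousLinearMap.snd ℂ _ _))
  have he_apply : ∀ q : ↥(rng A x₁) × ↥(rng A x₂), e q = (q.1 : X) + (q.2 : X) :=
    fun q => rfl
  have hker : LinearMap.ker (e : (↥(rng A x₁) × ↥(rng A x₂)) →ₗ[ℂ] X) = ⊥ := by
    rw [LinearMap.ker_eq_bot']
    rintro ⟨u, v⟩ huv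
    rw [ContinuousLinearMap.coe_coe, he_apply] at huv
    obtain ⟨cu, hcu⟩ := u.2
    obtain ⟨cv, hcv⟩ := v.2
    have h0 : (cu : X →L[ℂ] X) x₁ + (cv : X →L[ℂ] X) x₂ = 0 := by
      rw [show ((cu : X →L[ℂ] X) x₁ : X) = (u : X) from hcu,
        show ((cv : X →L[ℂ] X) x₂ : X) = (v : X) from hcv]
      exact huv
    obtain ⟨h1, h2⟩ := hind _ cu.2 _ cv.2 h0
    have hu0 : (u : X) = 0 := by rw [← (show ((cu : X →L[ℂ] X) x₁ : X) = (u : X) from hcu)]; exact h1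
    have hv0 : (v : X) = 0 := by rw [← (show ((cv : X →L[ℂ] X) x₂ : X) = (v : X) from hcv)]; exact h2
    exact Prod.ext (Subtype.ext hu0) (Subtype.ext hv0)
  have hrange : LinearMap.range (e : (↥(rng A x₁) × ↥(rng A x₂)) →ₗ[ℂ] X) = ⊤ := by
    rw [LinearMap.range_eq_top]
    intro y
    obtain ⟨a, ha, b, hb, hy⟩ := hspan y
    refine ⟨(⟨a x₁, hmem1 ⟨a, ha⟩⟩, ⟨b x₂, hmem2 ⟨b, hb⟩⟩), ?_⟩
    rw [ContinuousLinearMap.coe_coe, he_apply]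
    exact hy.symm
  let E := ContinuousLinearEquiv.ofBijective e hker hrange
  set K₀ : ℝ := ‖(E.symm : X →L[ℂ] (↥(rng A x₁) × ↥(rng A x₂)))‖ with hK₀def
  have hK₀0 : 0 ≤ K₀ := norm_nonneg _
  have hsplit : ∀ (u : ↥(rng A x₁)) (v : ↥(rng A x₂)),
      ‖(u : X)‖ ≤ K₀ * ‖(u : X) + (v : X)‖ ∧ ‖(v : X)‖ ≤ K₀ * ‖(u : X) + (v : X)‖ := by
    intro u v
    have hEuv : E (u, v) = (u : X) + (v : X) := he_apply (u, v)
    have h1 : E.symm ((u : X) + (v : X)) = (u, v) := by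
      rw [← hEuv]; exact E.symm_apply_apply (u, v)
    have h2 : ‖E.symm ((u : X) + (v : X))‖ ≤ K₀ * ‖(u : X) + (v : X)‖ :=
      (E.symm : X →L[ℂ] (↥(rng A x₁) × ↥(rng A x₂))).le_opNorm _
    rw [h1] at h2
    constructor
    · exact le_trans (norm_fst_le (u, v)) h2
    · exact le_trans (norm_snd_le (u, v)) h2
  -- operator norm bound: ‖a‖ ≤ C₁K₀‖a x₁‖ + C₂K₀‖a x₂‖
  have hopbound : ∀ (a : ↥A),
      ‖(a : X →L[ℂ] X)‖ ≤ C₁ * K₀ * ‖(a : X →L[ℂ] X) x₁‖ + C₂ * K₀ * ‖(a : X →L[ℂ] X) x₂‖ := by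
    intro a
    have hnonneg : 0 ≤ C₁ * K₀ * ‖(a : X →L[ℂ] X) x₁‖ + C₂ * K₀ * ‖(a : X →L[ℂ] X) x₂‖ := by
      positivity
    refine ContinuousLinearMap.opNorm_le_bound _ hnonneg (fun y => ?_)
    set u := (E.symm y).1 with hu
    set v := (E.symm y).2 with hv
    have hy : (u : X) + (v : X) = y := by
      have := E.apply_symm_apply y
      rw [show E (E.symm y) = ((E.symm y).1 : X) + ((E.symm y).2 : X) from he_apply _] at this
      exact this
    obtain ⟨b, hb, hbn⟩ := hC₁ u
    obtain ⟨c, hcv, hcn⟩ := hC₂ v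
    have hbx : (b : X →L[ℂ] X) x₁ = (u : X) := congrArg Subtype.val hb
    have hcx : (c : X →L[ℂ] X) x₂ = (v : X) := congrArg Subtype.val hcv
    have hcomm1 : (a : X →L[ℂ] X) ((b : X →L[ℂ] X) x₁) = (b : X →L[ℂ] X) ((a : X →L[ℂ] X) x₁) := by
      rw [← ContinuousLinearMap.mul_apply, ← ContinuousLinearMap.mul_apply,
        hcomm _ a.2 _ b.2]
    have hcomm2 : (a : X →L[ℂ] X) ((c : X →L[ℂ] X) x₂) = (c : X →L[ℂ] X) ((a : X →L[ℂ] X) x₂) := by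
      rw [← ContinuousLinearMap.mul_apply, ← ContinuousLinearMap.mul_apply,
        hcomm _ a.2 _ c.2]
    have hay : (a : X →L[ℂ] X) y
        = (b : X →L[ℂ] X) ((a : X →L[ℂ] X) x₁) + (c : X →L[ℂ] X) ((a : X →L[ℂ] X) x₂) := by
      conv_lhs => rw [← hy]
      rw [map_add, ← hbx, ← hcx, hcomm1, hcomm2]
    have hun : ‖(u : X)‖ ≤ K₀ * ‖y‖ := by
      have := (hsplit u v).1; rwa [hy] at this
    have hvn : ‖(v : X)‖ ≤ K₀ * ‖y‖ := by
      have := (hsplit u v).2; rwa [hy] at this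
    have hbn' : ‖b‖ ≤ C₁ * (K₀ * ‖y‖) := by
      calc ‖b‖ ≤ C₁ * ‖u‖ := hbn
        _ ≤ C₁ * (K₀ * ‖y‖) := by
          exact mul_le_mul_of_nonneg_left hun (le_of_lt hC₁pos)
    have hcn' : ‖c‖ ≤ C₂ * (K₀ * ‖y‖) := by
      calc ‖c‖ ≤ C₂ * ‖v‖ := hcn
        _ ≤ C₂ * (K₀ * ‖y‖) := by
          exact mul_le_mul_of_nonneg_left hvn (le_of_lt hC₂pos)
    calc ‖(a : X →L[ℂ] X) y‖
        ≤ ‖(b : X →L[ℂ] X) ((a : X →L[ℂ] X) x₁)‖ + ‖(c : X →L[ℂ] X) ((a : X →L[ℂ] X) x₂)‖ := by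
          rw [hay]; exact norm_add_le _ _
      _ ≤ ‖b‖ * ‖(a : X →L[ℂ] X) x₁‖ + ‖c‖ * ‖(a : X →L[ℂ] X) x₂‖ := by
          gcongr
          · exact (b : X →L[ℂ] X).le_opNorm _
          · exact (c : X →L[ℂ] X).le_opNorm _
      _ ≤ (C₁ * (K₀ * ‖y‖)) * ‖(a : X →L[ℂ] X) x₁‖ + (C₂ * (K₀ * ‖y‖)) * ‖(a : X →L[ℂ] X) x₂‖ := by
          gcongr
      _ = (C₁ * K₀ * ‖(a : X →L[ℂ] X) x₁‖ + C₂ * K₀ * ‖(a : X →L[ℂ] X) x₂‖) * ‖y‖ := by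
          ring
  -- the map `a ↦ a x₁ + a x₂` is bounded below, so has closed range
  let Φ : ↥A →L[ℂ] X := ev A x₁ + ev A x₂
  have hΦ : ∀ a : ↥A, Φ a = (a : X →L[ℂ] X) x₁ + (a : X →L[ℂ] X) x₂ := fun a => rfl
  set C₃ : ℝ := C₁ * K₀ * K₀ + C₂ * K₀ * K₀ with hC₃def
  have hC₃0 : 0 ≤ C₃ := by positivity
  have hΦlow : ∀ a : ↥A, ‖a‖ ≤ C₃ * ‖Φ a‖ := by
    intro a
    have h2 := (hsplit ⟨_, hmem1 a⟩ ⟨_, hmem2 a⟩).1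
    have h3 := (hsplit ⟨_, hmem1 a⟩ ⟨_, hmem2 a⟩).2
    simp only [Submodule.coe_mk] at h2 h3
    have hΦa : (a : X →L[ℂ] X) x₁ + (a : X →L[ℂ] X) x₂ = Φ a := (hΦ a).symm
    rw [hΦa] at h2 h3
    have hnorm : ‖a‖ = ‖(a : X →L[ℂ] X)‖ := rfl
    calc ‖a‖ ≤ C₁ * K₀ * ‖(a : X →L[ℂ] X) x₁‖ + C₂ * K₀ * ‖(a : X →L[ℂ] X) x₂‖ := by
          rw [hnorm]; exact hopbound a
      _ ≤ C₁ * K₀ * (K₀ * ‖Φ a‖) + C₂ * K₀ * (K₀ * ‖Φ a‖) := by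
          gcongr
      _ = C₃ * ‖Φ a‖ := by rw [hC₃def]; ring
  have halip : AntilipschitzWith C₃.toNNReal Φ :=
    ContinuousLinearMap.antilipschitz_of_bound Φ (fun a => by
      rw [Real.coe_toNNReal _ hC₃0]; exact hΦlow a)
  have hVclosed : IsClosed (Set.range Φ) :=
    halip.isClosed_range Φ.uniformContinuous
  let V : Submodule ℂ X := LinearMap.range (Φ : ↥A →ₗ[ℂ] X)
  have hVc : IsClosed ((V : Submodule ℂ X) : Set X) := by
    have : ((V : Submodule ℂ X) : Set X) = Set.range Φ := by
      ext y; exact ⟨fun ⟨c, hc⟩ => ⟨c, hc⟩, fun ⟨c, hc⟩ => ⟨c, hc⟩⟩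
    rw [this]; exact hVclosed
  have hVinv : ∀ a ∈ A, ∀ y ∈ V, a y ∈ V := by
    rintro a ha y ⟨b, rfl⟩
    refine ⟨⟨a, ha⟩ * b, ?_⟩
    rw [ContinuousLinearMap.coe_coe, hΦ, hΦ, Subalgebra.coe_mul, ContinuousLinearMap.mul_apply,
      ContinuousLinearMap.mul_apply, map_add]
  have hx12V : x₁ + x₂ ∈ V := ⟨1, by rw [ContinuousLinearMap.coe_coe, hΦ]; simp⟩
  obtain ⟨a₀, ha₀⟩ := hT V hVc hVinv _ hx12V
  -- invariance of the ranges, and `T xⱼ ∈ A xⱼ`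
  have hinv1 : ∀ a ∈ A, ∀ y ∈ rng A x₁, a y ∈ rng A x₁ := by
    rintro a ha y ⟨c, rfl⟩
    exact ⟨⟨a, ha⟩ * c, by rw [ContinuousLinearMap.coe_coe, ev_apply, ev_apply, Subalgebra.coe_mul,
      ContinuousLinearMap.mul_apply]⟩
  have hinv2 : ∀ a ∈ A, ∀ y ∈ rng A x₂, a y ∈ rng A x₂ := by
    rintro a ha y ⟨c, rfl⟩
    exact ⟨⟨a, ha⟩ * c, by rw [ContinuousLinearMap.coe_coe, ev_apply, ev_apply, Subalgebra.coe_mul,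
      ContinuousLinearMap.mul_apply]⟩
  obtain ⟨a₁, ha₁⟩ := hT _ hM1c hinv1 x₁ ⟨1, by simp⟩
  obtain ⟨a₂, ha₂⟩ := hT _ hM2c hinv2 x₂ ⟨1, by simp⟩
  rw [ContinuousLinearMap.coe_coe, ev_apply] at ha₁ ha₂
  -- conclude `T x₁ = a₀ x₁`, `T x₂ = a₀ x₂`
  have hΦa₀ : (a₀ : X →L[ℂ] X) x₁ + (a₀ : X →L[ℂ] X) x₂ = T (x₁ + x₂) := by
    rw [← hΦ a₀]; exact ha₀
  have hkey0 : (↑(a₁ - a₀) : X →L[ℂ] X) x₁ + (↑(a₂ - a₀) : X →L[ℂ] X) x₂ = 0 := by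
    have e1 : (↑(a₁ - a₀) : X →L[ℂ] X) = (a₁ : X →L[ℂ] X) - (a₀ : X →L[ℂ] X) := rfl
    have e2 : (↑(a₂ - a₀) : X →L[ℂ] X) = (a₂ : X →L[ℂ] X) - (a₀ : X →L[ℂ] X) := rfl
    have hsum : T x₁ + T x₂ = (a₀ : X →L[ℂ] X) x₁ + (a₀ : X →L[ℂ] X) x₂ := by
      rw [hΦa₀, map_add]
    rw [e1, e2, ContinuousLinearMap.sub_apply, ContinuousLinearMap.sub_apply, ha₁, ha₂,
      sub_add_sub_comm, hsum, sub_self]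
  obtain ⟨hz1, hz2⟩ := hind _ (a₁ - a₀).2 _ (a₂ - a₀).2 hkey0
  have hTx1 : T x₁ = (a₀ : X →L[ℂ] X) x₁ := by
    have h := hz1
    rw [show ((↑(a₁ - a₀) : X →L[ℂ] X)) = (a₁ : X →L[ℂ] X) - (a₀ : X →L[ℂ] X) from rfl,
      ContinuousLinearMap.sub_apply, sub_eq_zero] at h
    rw [← ha₁, h]
  have hTx2 : T x₂ = (a₀ : X →L[ℂ] X) x₂ := by
    have h := hz2
    rw [show ((↑(a₂ - a₀) : X →L[ℂ] X)) = (a₂ : X →L[ℂ] X) - (a₀ : X →L[ℂ] X) from rfl,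
      ContinuousLinearMap.sub_apply, sub_eq_zero] at h
    rw [← ha₂, h]
  -- the operator `S := T - a₀` vanishes on `x₁, x₂` and lies in `algLat A`
  set S : X →L[ℂ] X := T - (a₀ : X →L[ℂ] X) with hSdef
  have hSlat : ∀ K : Submodule ℂ X, IsClosed (K : Set X) →
      (∀ a ∈ A, ∀ y ∈ K, a y ∈ K) → ∀ y ∈ K, S y ∈ K := by
    intro K hKc hKinv y hy
    have h1 := hT K hKc hKinv y hy
    have h2 := hKinv _ a₀.2 y hy
    rw [hSdef]
    exact K.sub_mem h1 h2
  have hSx1 : S x₁ = 0 := by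
    rw [hSdef, ContinuousLinearMap.sub_apply, hTx1, sub_self]
  have hSx2 : S x₂ = 0 := by
    rw [hSdef, ContinuousLinearMap.sub_apply, hTx2, sub_self]
  -- final assembly
  refine ⟨(a₀ : X →L[ℂ] X), a₀.2, fun y => ?_⟩
  obtain ⟨a, ha, b, hb, hy⟩ := hspan y
  have hw1 : S (a x₁) ∈ rng A x₁ := by
    have h1 := hT _ hM1c hinv1 _ (hmem1 ⟨a, ha⟩)
    have h2 : (a₀ : X →L[ℂ] X) (a x₁) ∈ rng A x₁ :=
      hinv1 _ a₀.2 _ (hmem1 ⟨a, ha⟩)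
    rw [hSdef]
    exact (rng A x₁).sub_mem h1 h2
  have hw2 : S (b x₂) ∈ rng A x₂ := by
    have h1 := hT _ hM2c hinv2 _ (hmem2 ⟨b, hb⟩)
    have h2 : (a₀ : X →L[ℂ] X) (b x₂) ∈ rng A x₂ :=
      hinv2 _ a₀.2 _ (hmem2 ⟨b, hb⟩)
    rw [hSdef]
    exact (rng A x₂).sub_mem h1 h2
  obtain ⟨c₁, hc₁⟩ := hw1
  obtain ⟨c₂, hc₂⟩ := hw2
  rw [ContinuousLinearMap.coe_coe, ev_apply] at hc₁ hc₂
  refine ⟨c₁, c₂, ?_, ?_, ?_⟩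
  · -- inRadical A x₁ c₁
    intro M hM hle
    have hkey := key_step A hcomm x₁ hc1 S hSlat hSx1 M hM hle ⟨a, ha⟩
    obtain ⟨m₂, hm₂M, hm₂⟩ := hkey
    have : c₁ - m₂ ∈ annIdeal A x₁ := by
      show (↑(c₁ - m₂) : X →L[ℂ] X) x₁ = 0
      rw [show ((↑(c₁ - m₂) : X →L[ℂ] X)) = (c₁ : X →L[ℂ] X) - (m₂ : X →L[ℂ] X) from rfl,
        ContinuousLinearMap.sub_apply, hc₁, hm₂, sub_self]
    have h2 := hle this
    have h3 : c₁ = (c₁ - m₂) + m₂ := by abel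
    rw [h3]
    exact M.add_mem h2 hm₂M
  · intro M hM hle
    have hkey := key_step A hcomm x₂ hc2 S hSlat hSx2 M hM hle ⟨b, hb⟩
    obtain ⟨m₂, hm₂M, hm₂⟩ := hkey
    have : c₂ - m₂ ∈ annIdeal A x₂ := by
      show (↑(c₂ - m₂) : X →L[ℂ] X) x₂ = 0
      rw [show ((↑(c₂ - m₂) : X →L[ℂ] X)) = (c₂ : X →L[ℂ] X) - (m₂ : X →L[ℂ] X) from rfl,
        ContinuousLinearMap.sub_apply, hc₂, hm₂, sub_self]
    have h2 := hle this
    have h3 : c₂ = (c₂ - m₂) + m₂ := by abel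
    rw [h3]
    exact M.add_mem h2 hm₂M
  · -- the equation
    have h1 : T y = T (a x₁) + T (b x₂) := by
      rw [hy]; exact map_add T _ _
    have h2 : (a₀ : X →L[ℂ] X) y
        = (a₀ : X →L[ℂ] X) (a x₁) + (a₀ : X →L[ℂ] X) (b x₂) := by
      rw [hy]; exact map_add _ _ _
    have hc₁' : (c₁ : X →L[ℂ] X) x₁
        = T (a x₁) - (a₀ : X →L[ℂ] X) (a x₁) := by
      rw [hc₁, hSdef]; rfl
    have hc₂' : (c₂ : X →L[ℂ] X) x₂
        = T (b x₂) - (a₀ : X →L[ℂ] X) (b x₂) := by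
      rw [hc₂, hSdef]; rfl
    rw [h1, h2, hc₁', hc₂']
    abel
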